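/- Let λ ≠ 0, k ≠ 0 be real constants and fix ε ∈ ℝ. If φ : ℝ × ℝ → ℝ is a positive differentiable solution of u_t + u^k·u_x + λ·u = 0 on ℝ², then the function ψ(x,t) = (φ(x/(1 + λ ε k e^{−λ k t}), (1/(λk))·ln(λ ε k + e^{λ k t}))^k − λ² k² ε x e^{−λ k t}/(1 + λ ε k e^{−λ k t}))^{1/k} satisfies the same equation at every point (x,t) where λ ε k + e^{λ k t} > 0 and the quantity φ(x/(1 + λ ε k e^{−λ k t}), (1/(λk))·ln(λ ε k + e^{λ k t}))^k − λ² k² ε x e^{−λ k t}/(1 + λ ε k e^{−λ k t}) is positive. -/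

import Mathlib

open Real

set_option maxHeartbeats 2000000 in
/-- case m = 1. If φ is a positive differentiable solution of
`u_t + u^k·u_x + λ·u = 0` on ℝ², then
`ψ(x,t) = (φ(x/(1 + λεk e^{−λkt}), (1/(λk))·ln(λεk + e^{λkt}))^k
            − λ²k²ε x e^{−λkt}/(1 + λεk e^{−λkt}))^{1/k}`
satisfies the same equation at every point where `λεk + e^{λkt} > 0` and the
quantity under the (1/k)-th power is positive. -/
theorem case7_G8_transformation
    (lam k : ℝ) (hlam : lam ≠ 0) (hk : k ≠ 0) (ε : ℝ)
    (φ : ℝ × ℝ → ℝ)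
    (hφ : Differentiable ℝ φ)
    (hpos : ∀ x t : ℝ, 0 < φ (x, t))
    (hsol : ∀ x t : ℝ,
      fderiv ℝ φ (x, t) (0, 1) + φ (x, t) ^ k * fderiv ℝ φ (x, t) (1, 0)
        + lam * φ (x, t) = 0) :
    ∀ ψ : ℝ × ℝ → ℝ,
      ψ = (fun p : ℝ × ℝ =>
        (φ (p.1 / (1 + lam * ε * k * exp (-(lam * k * p.2))),
            (1 / (lam * k)) * Real.log (lam * ε * k + exp (lam * k * p.2))) ^ k
          - lam ^ 2 * k ^ 2 * ε * p.1 * exp (-(lam * k * p.2)) /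
              (1 + lam * ε * k * exp (-(lam * k * p.2)))) ^ (1 / k)) →
      ∀ x t : ℝ,
        0 < lam * ε * k + exp (lam * k * t) →
        0 < φ (x / (1 + lam * ε * k * exp (-(lam * k * t))),
              (1 / (lam * k)) * Real.log (lam * ε * k + exp (lam * k * t))) ^ k
            - lam ^ 2 * k ^ 2 * ε * x * exp (-(lam * k * t)) /
                (1 + lam * ε * k * exp (-(lam * k * t))) →
        DifferentiableAt ℝ ψ (x, t) ∧
        fderiv ℝ ψ (x, t) (0, 1) + ψ (x, t) ^ k * fderiv ℝ ψ (x, t) (1, 0)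
          + lam * ψ (x, t) = 0 := by
  intro ψ hψ x t hS hFpos
  have hfrac : ∀ s : ℝ, (1 : ℝ) + lam * ε * k * exp (-(lam * k * s))
      = (lam * ε * k + exp (lam * k * s)) / exp (lam * k * s) := by
    intro s
    rw [exp_neg, eq_div_iff (exp_ne_zero _)]
    field_simp
    ring
  have h1 : ∀ y s : ℝ, y / (1 + lam * ε * k * exp (-(lam * k * s)))
      = y * exp (lam * k * s) * (lam * ε * k + exp (lam * k * s))⁻¹ := by
    intro y s
    rw [hfrac, div_div_eq_mul_div, ← div_eq_mul_inv]
  have h2 : ∀ y s : ℝ, lam ^ 2 * k ^ 2 * ε * y * exp (-(lam * k * s)) /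
        (1 + lam * ε * k * exp (-(lam * k * s)))
      = lam ^ 2 * k ^ 2 * ε * y * (lam * ε * k + exp (lam * k * s))⁻¹ := by
    intro y s
    rw [hfrac, div_div_eq_mul_div, exp_neg, mul_assoc, inv_mul_cancel₀ (exp_ne_zero _),
      mul_one, ← div_eq_mul_inv]
  have hψ' : ψ = fun p : ℝ × ℝ =>
      (φ (p.1 * exp (lam * k * p.2) * (lam * ε * k + exp (lam * k * p.2))⁻¹,
          1 / (lam * k) * Real.log (lam * ε * k + exp (lam * k * p.2))) ^ k
        - lam ^ 2 * k ^ 2 * ε * p.1 * (lam * ε * k + exp (lam * k * p.2))⁻¹) ^ (1 / k) := by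
    rw [hψ]
    funext p
    rw [h1, h2]
  simp only [hψ']
  rw [h1 x t, h2 x t] at hFpos
  have hE0 : (0:ℝ) < exp (lam * k * t) := exp_pos _
  set E : ℝ := exp (lam * k * t) with hEdef
  set S : ℝ := lam * ε * k + E with hSdef
  have hSne : S ≠ 0 := ne_of_gt hS
  set X0 : ℝ := x * E * S⁻¹ with hX0def
  set T0 : ℝ := 1 / (lam * k) * Real.log S with hT0def
  set u : ℝ := φ (X0, T0) with hudef
  have hu0 : 0 < u := hpos X0 T0
  -- continuous linear maps
  set F1 : ℝ × ℝ →L[ℝ] ℝ := ContinuousLinearMap.fst ℝ ℝ ℝ with hF1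
  set F2 : ℝ × ℝ →L[ℝ] ℝ := ContinuousLinearMap.snd ℝ ℝ ℝ with hF2
  -- derivative of exp part
  have hexp : HasFDerivAt (fun p : ℝ × ℝ => exp (lam * k * p.2))
      ((lam * k * E) • F2) (x, t) := by
    have h0 : HasFDerivAt (fun p : ℝ × ℝ => lam * k * p.2) ((lam * k) • F2) (x, t) :=
      hasFDerivAt_snd.const_mul (lam * k)
    have h := (Real.hasDerivAt_exp (lam * k * t)).comp_hasFDerivAt (x, t) h0
    exact h.congr_fderiv (by rw [smul_smul, hEdef]; ring_nf)
  have hSadd : HasFDerivAt (fun p : ℝ × ℝ => lam * ε * k + exp (lam * k * p.2))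
      ((lam * k * E) • F2) (x, t) := hexp.const_add _
  have hSinv : HasFDerivAt (fun p : ℝ × ℝ => (lam * ε * k + exp (lam * k * p.2))⁻¹)
      ((-(S ^ 2)⁻¹ * (lam * k * E)) • F2) (x, t) := by
    have h := (hasDerivAt_inv hSne).comp_hasFDerivAt (x, t) hSadd
    exact h.congr_fderiv (by rw [smul_smul])
  have hX : HasFDerivAt
      (fun p : ℝ × ℝ => p.1 * exp (lam * k * p.2) * (lam * ε * k + exp (lam * k * p.2))⁻¹)
      ((E * S⁻¹) • F1 + (lam * k * x * E * (lam * ε * k) * (S ^ 2)⁻¹) • F2) (x, t) := by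
    have h := (hasFDerivAt_fst.mul hexp).mul hSinv
    refine h.congr_fderiv ?_
    refine ContinuousLinearMap.ext fun v => ?_
    have hSne' : lam * ε * k + exp (lam * k * t) ≠ 0 := hSne
    simp only [hF1, hF2, ContinuousLinearMap.smul_apply, ContinuousLinearMap.add_apply,
      ContinuousLinearMap.coe_fst', ContinuousLinearMap.coe_snd', smul_eq_mul, hSdef, hEdef,
      Pi.mul_apply]
    field_simp
    ring
  have hT : HasFDerivAt
      (fun p : ℝ × ℝ => 1 / (lam * k) * Real.log (lam * ε * k + exp (lam * k * p.2)))
      ((E * S⁻¹) • F2) (x, t) := by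
    have h := ((Real.hasDerivAt_log hSne).comp_hasFDerivAt (x, t) hSadd).const_mul (1 / (lam * k))
    refine h.congr_fderiv ?_
    refine ContinuousLinearMap.ext fun v => ?_
    have hSne' : lam * ε * k + exp (lam * k * t) ≠ 0 := hSne
    simp only [hF1, hF2, ContinuousLinearMap.smul_apply, ContinuousLinearMap.coe_snd',
      smul_eq_mul, hSdef, hEdef]
    field_simp
  have hc : HasFDerivAt
      (fun p : ℝ × ℝ => lam ^ 2 * k ^ 2 * ε * p.1 * (lam * ε * k + exp (lam * k * p.2))⁻¹)
      ((lam ^ 2 * k ^ 2 * ε * S⁻¹) • F1 + (-(lam ^ 3 * k ^ 3 * ε * x * E) * (S ^ 2)⁻¹) • F2)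
      (x, t) := by
    have h := (hasFDerivAt_fst.const_mul (lam ^ 2 * k ^ 2 * ε)).mul hSinv
    refine h.congr_fderiv ?_
    refine ContinuousLinearMap.ext fun v => ?_
    have hSne' : lam * ε * k + exp (lam * k * t) ≠ 0 := hSne
    simp only [hF1, hF2, ContinuousLinearMap.smul_apply, ContinuousLinearMap.add_apply,
      ContinuousLinearMap.coe_fst', ContinuousLinearMap.coe_snd', smul_eq_mul, hSdef, hEdef]
    field_simp
    ring
  have hu : HasFDerivAt
      (fun p : ℝ × ℝ => φ (p.1 * exp (lam * k * p.2) * (lam * ε * k + exp (lam * k * p.2))⁻¹,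
        1 / (lam * k) * Real.log (lam * ε * k + exp (lam * k * p.2))))
      ((fderiv ℝ φ (X0, T0)).comp
        (((E * S⁻¹) • F1 + (lam * k * x * E * (lam * ε * k) * (S ^ 2)⁻¹) • F2).prod
          ((E * S⁻¹) • F2))) (x, t) :=
    (hφ (X0, T0)).hasFDerivAt.comp (x, t) (hX.prodMk hT)
  have hG0 : 0 < u ^ k - lam ^ 2 * k ^ 2 * ε * x * S⁻¹ := hFpos
  have hG : HasFDerivAt
      (fun p : ℝ × ℝ => φ (p.1 * exp (lam * k * p.2) * (lam * ε * k + exp (lam * k * p.2))⁻¹,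
        1 / (lam * k) * Real.log (lam * ε * k + exp (lam * k * p.2))) ^ k
        - lam ^ 2 * k ^ 2 * ε * p.1 * (lam * ε * k + exp (lam * k * p.2))⁻¹)
      (((k * u ^ (k - 1)) • ((fderiv ℝ φ (X0, T0)).comp
        (((E * S⁻¹) • F1 + (lam * k * x * E * (lam * ε * k) * (S ^ 2)⁻¹) • F2).prod
          ((E * S⁻¹) • F2))))
        - ((lam ^ 2 * k ^ 2 * ε * S⁻¹) • F1 + (-(lam ^ 3 * k ^ 3 * ε * x * E) * (S ^ 2)⁻¹) • F2))
      (x, t) :=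
    (hu.rpow_const (Or.inl hu0.ne')).sub hc
  have hψ3 : HasFDerivAt
      (fun p : ℝ × ℝ => (φ (p.1 * exp (lam * k * p.2) * (lam * ε * k + exp (lam * k * p.2))⁻¹,
        1 / (lam * k) * Real.log (lam * ε * k + exp (lam * k * p.2))) ^ k
        - lam ^ 2 * k ^ 2 * ε * p.1 * (lam * ε * k + exp (lam * k * p.2))⁻¹) ^ (1 / k))
      (((1 / k) * (u ^ k - lam ^ 2 * k ^ 2 * ε * x * S⁻¹) ^ (1 / k - 1)) •
        (((k * u ^ (k - 1)) • ((fderiv ℝ φ (X0, T0)).comp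
          (((E * S⁻¹) • F1 + (lam * k * x * E * (lam * ε * k) * (S ^ 2)⁻¹) • F2).prod
            ((E * S⁻¹) • F2))))
          - ((lam ^ 2 * k ^ 2 * ε * S⁻¹) • F1
            + (-(lam ^ 3 * k ^ 3 * ε * x * E) * (S ^ 2)⁻¹) • F2)))
      (x, t) :=
    hG.rpow_const (Or.inl hG0.ne')
  refine ⟨hψ3.differentiableAt, ?_⟩
  rw [hψ3.fderiv]
  have hlin : ∀ a b : ℝ, fderiv ℝ φ (X0, T0) (a, b)
      = a * fderiv ℝ φ (X0, T0) (1, 0) + b * fderiv ℝ φ (X0, T0) (0, 1) := by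
    intro a b
    have hv : ((a, b) : ℝ × ℝ) = a • ((1 : ℝ), (0 : ℝ)) + b • ((0 : ℝ), (1 : ℝ)) := by
      simp
    rw [hv, map_add, map_smul, map_smul, smul_eq_mul, smul_eq_mul]
  simp only [hF1, hF2, ContinuousLinearMap.smul_apply, ContinuousLinearMap.sub_apply,
    ContinuousLinearMap.add_apply, ContinuousLinearMap.comp_apply,
    ContinuousLinearMap.prod_apply, ContinuousLinearMap.coe_fst', ContinuousLinearMap.coe_snd',
    smul_eq_mul, mul_zero, mul_one, zero_add, add_zero]
  have hv1 : fderiv ℝ φ (X0, T0) (lam * k * x * E * (lam * ε * k) * (S ^ 2)⁻¹, E * S⁻¹)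
      = (lam * k * x * E * (lam * ε * k) * (S ^ 2)⁻¹) * fderiv ℝ φ (X0, T0) (1, 0)
        + (E * S⁻¹) * fderiv ℝ φ (X0, T0) (0, 1) := hlin _ _
  have hv2 : fderiv ℝ φ (X0, T0) (E * S⁻¹, 0)
      = (E * S⁻¹) * fderiv ℝ φ (X0, T0) (1, 0) := by
    have h := hlin (E * S⁻¹) 0
    simpa using h
  rw [hv1, hv2]
  have hB : fderiv ℝ φ (X0, T0) (0, 1)
      = -(u ^ k * fderiv ℝ φ (X0, T0) (1, 0)) - lam * u := by
    have h := hsol X0 T0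
    rw [← hudef] at h
    linarith
  rw [hB]
  have hvk : ((u ^ k - lam ^ 2 * k ^ 2 * ε * x * S⁻¹) ^ (1 / k)) ^ k
      = u ^ k - lam ^ 2 * k ^ 2 * ε * x * S⁻¹ := by
    rw [← Real.rpow_mul hG0.le, one_div, inv_mul_cancel₀ hk, Real.rpow_one]
  have hR : (u ^ k - lam ^ 2 * k ^ 2 * ε * x * S⁻¹) ^ (1 / k)
      = (u ^ k - lam ^ 2 * k ^ 2 * ε * x * S⁻¹) ^ (1 / k - 1)
        * (u ^ k - lam ^ 2 * k ^ 2 * ε * x * S⁻¹) := by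
    rw [← Real.rpow_add_one hG0.ne', sub_add_cancel]
  have hPQ : u ^ k = u ^ (k - 1) * u := by
    rw [← Real.rpow_add_one hu0.ne', sub_add_cancel]
  rw [hvk, hR, hPQ, hSdef]
  have hSne2 : lam * ε * k + E ≠ 0 := by rw [← hSdef]; exact hSne
  field_simp
  apply mul_eq_zero_of_right
  have hS3 : k * lam * ε + E ≠ 0 := by convert hSne2 using 1; ring
  field_simp
  ring
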